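/- Let N = ℤ^{2n+3} with standard basis e_{x1}, e_{x2}, e_w, e_{y1},...,e_{yn}, e_{z1},...,e_{zn}, and let m, n ≥ 1. Let L be the subgroup generated by: e_{x1}+e_{yn}+e_{zn}; e_{x2}; e_w; e_{yi} and e_{zi} for 1 ≤ i ≤ n−1; e_{x1} + Σ_{i=1}^n e_{yi}; and e_{x1} + e_{x2} + m·e_w + Σ_{i=1}^n (mi+1)(e_{yi}+e_{zi}). Then the index [N : L] equals mn. -/
import Mathlib


/-- The ambient lattice `N = ℤ^{2n+3}`, with coordinates
`x₁, x₂, w, y₁, …, yₙ, z₁, …, zₙ`, modelled as `ℤ × ℤ × ℤ × (Fin n → ℤ) × (Fin n → ℤ)`. -/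
abbrev LatticeV (n : ℕ) : Type := ℤ × ℤ × ℤ × (Fin n → ℤ) × (Fin n → ℤ)

/-- The unit vector `e_{x₁}`. -/
def ex1 (n : ℕ) : LatticeV n := (1, 0, 0, 0, 0)
/-- The unit vector `e_{x₂}`. -/
def ex2 (n : ℕ) : LatticeV n := (0, 1, 0, 0, 0)
/-- The unit vector `e_w`. -/
def ew (n : ℕ) : LatticeV n := (0, 0, 1, 0, 0)
/-- The unit vector `e_{yᵢ}` (here `i : Fin n` corresponds to the index `i+1`). -/
def ey (n : ℕ) (i : Fin n) : LatticeV n := (0, 0, 0, Pi.single i 1, 0)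
/-- The unit vector `e_{zᵢ}` (here `i : Fin n` corresponds to the index `i+1`). -/
def ez (n : ℕ) (i : Fin n) : LatticeV n := (0, 0, 0, 0, Pi.single i 1)

/-- `v₂ = e_{x₁} + ∑_{i=1}^n e_{yᵢ}`. -/
def v2 (n : ℕ) : LatticeV n := ex1 n + ∑ i : Fin n, ey n i

/-- `v_nlin = e_{x₁} + e_{x₂} + m·e_w + ∑_{i=1}^n (mi+1)·(e_{yᵢ} + e_{zᵢ})`. -/
def vnlin (m n : ℕ) : LatticeV n :=
  ex1 n + ex2 n + (m : ℤ) • ew n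
    + ∑ i : Fin n, ((m : ℤ) * ((i : ℕ) + 1) + 1) • (ey n i + ez n i)

lemma v2_eq (n : ℕ) : v2 n = (1, 0, 0, fun _ => (1:ℤ), 0) := by
  unfold v2 ex1 ey
  refine Prod.ext ?_ (Prod.ext ?_ (Prod.ext ?_ (Prod.ext ?_ ?_))) <;>
    simp [Prod.fst_sum, Prod.snd_sum]
  funext j
  simp [Finset.sum_apply, Pi.single_apply]

lemma vnlin_eq (m n : ℕ) : vnlin m n =
    (1, 1, (m:ℤ), fun i : Fin n => (m:ℤ)*((i:ℕ)+1)+1,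
      fun i : Fin n => (m:ℤ)*((i:ℕ)+1)+1) := by
  unfold vnlin ex1 ex2 ew ey ez
  refine Prod.ext ?_ (Prod.ext ?_ (Prod.ext ?_ (Prod.ext ?_ ?_))) <;>
    simp [Prod.fst_sum, Prod.snd_sum] <;> funext j <;>
    simp [Finset.sum_apply, Pi.single_apply, mul_ite, Finset.sum_ite_eq]

lemma g0_eq (n : ℕ) (i : Fin n) : ex1 n + ey n i + ez n i =
    ((1:ℤ), (0:ℤ), (0:ℤ), Pi.single i (1:ℤ), Pi.single i (1:ℤ)) := by
  unfold ex1 ey ez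
  refine Prod.ext ?_ (Prod.ext ?_ (Prod.ext ?_ (Prod.ext ?_ ?_))) <;> simp

/-- Decomposition of a kernel element as a combination of the generators. -/
lemma key_decomp (m n : ℕ) (hn : 1 ≤ n) (hlt : n - 1 < n)
    (v : LatticeV n) (γ : ℤ)
    (hγeq : v.2.2.2.1 ⟨n-1,hlt⟩ - v.1 = (m : ℤ) * n * γ) :
    v = (v.2.2.2.2 ⟨n-1,hlt⟩ - ((m:ℤ)*n+1)*γ)
          • (ex1 n + ey n ⟨n-1,hlt⟩ + ez n ⟨n-1,hlt⟩)
      + (v.1 - (v.2.2.2.2 ⟨n-1,hlt⟩ - ((m:ℤ)*n+1)*γ) - γ) • v2 n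
      + γ • vnlin m n
      + (v.2.1 - γ) • ex2 n + (v.2.2.1 - (m:ℤ)*γ) • ew n
      + (∑ i : Fin n, (if i = (⟨n-1,hlt⟩ : Fin n) then 0
          else v.2.2.2.1 i - (v.1 - (v.2.2.2.2 ⟨n-1,hlt⟩ - ((m:ℤ)*n+1)*γ) - γ)
            - ((m:ℤ)*((i:ℕ)+1)+1)*γ) • ey n i)
      + (∑ i : Fin n, (if i = (⟨n-1,hlt⟩ : Fin n) then 0
          else v.2.2.2.2 i - ((m:ℤ)*((i:ℕ)+1)+1)*γ) • ez n i) := by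
  rw [g0_eq, v2_eq, vnlin_eq]
  unfold ex2 ew ey ez
  refine Prod.ext ?_ (Prod.ext ?_ (Prod.ext ?_ (Prod.ext ?_ ?_))) <;>
    simp only [Prod.fst_add, Prod.snd_add, Prod.smul_fst, Prod.smul_snd,
      Prod.fst_sum, Prod.snd_sum, smul_eq_mul, smul_zero, Pi.add_apply,
      mul_zero, mul_one, add_zero, zero_add, Finset.sum_const_zero, ite_mul, zero_mul,
      Finset.sum_ite_eq, Finset.mem_univ, if_true]
  · ring
  · ring
  · ring
  · funext j
    simp only [Pi.add_apply, Pi.smul_apply, Finset.sum_apply, smul_eq_mul,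
      Pi.single_apply, mul_ite, mul_zero, mul_one, ite_mul, zero_mul,
      Finset.sum_ite_eq, Finset.mem_univ, if_true, Pi.zero_apply, add_zero, zero_add]
    rcases eq_or_ne j ⟨n-1,hlt⟩ with rfl | hj
    · simp only [if_pos rfl]
      have hn' : (((n-1 : ℕ)) : ℤ) + 1 = (n : ℤ) := by omega
      push_cast
      rw [hn']
      linear_combination hγeq
    · simp only [if_neg hj]
      ring
  · funext j
    simp only [Pi.add_apply, Pi.smul_apply, Finset.sum_apply, smul_eq_mul,
      Pi.single_apply, mul_ite, mul_zero, mul_one, ite_mul, zero_mul,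
      Finset.sum_ite_eq, Finset.mem_univ, if_true, Pi.zero_apply, add_zero, zero_add]
    rcases eq_or_ne j ⟨n-1,hlt⟩ with rfl | hj
    · simp only [if_pos rfl]
      have hn' : (((n-1 : ℕ)) : ℤ) + 1 = (n : ℤ) := by omega
      push_cast
      rw [hn']
      ring
    · simp only [if_neg hj]
      ring

/-- The homomorphism to `ZMod (m*n)` whose kernel is `L`. -/
def phi (m n : ℕ) (h : n - 1 < n) : LatticeV n →+ ZMod (m*n) where
  toFun v := ((v.1 - v.2.2.2.1 ⟨n-1, h⟩ : ℤ) : ZMod (m*n))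
  map_zero' := by simp
  map_add' a b := by
    simp only [Prod.fst_add, Prod.snd_add, Pi.add_apply]
    push_cast
    ring

/-- Let `N = ℤ^{2n+3}` with `m, n ≥ 1`, and let `L` be the subgroup generated
by `e_{x₁}+e_{yₙ}+e_{zₙ}`, `e_{x₂}`, `e_w`, the `e_{yᵢ}` and `e_{zᵢ}` for
`1 ≤ i ≤ n−1`, `e_{x₁} + ∑ e_{yᵢ}`, and
`e_{x₁}+e_{x₂}+m·e_w+∑ (mi+1)(e_{yᵢ}+e_{zᵢ})`. Then `[N : L] = mn`. -/
theorem first_sublattice_index (m n : ℕ) (hm : 1 ≤ m) (hn : 1 ≤ n)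
    (L : AddSubgroup (LatticeV n))
    (hL : L = AddSubgroup.closure
      ({ex1 n + ey n ⟨n - 1, by omega⟩ + ez n ⟨n - 1, by omega⟩, ex2 n, ew n}
        ∪ {v | ∃ i : Fin n, (i : ℕ) + 1 < n ∧ v = ey n i}
        ∪ {v | ∃ i : Fin n, (i : ℕ) + 1 < n ∧ v = ez n i}
        ∪ {v2 n, vnlin m n})) :
    L.index = m * n := by
  have hlt : n - 1 < n := by omega
  have hLker : L = (phi m n hlt).ker := by
    rw [hL]
    apply le_antisymm
    · rw [AddSubgroup.closure_le]
      rintro v hv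
      simp only [Set.mem_union, Set.mem_insert_iff, Set.mem_singleton_iff,
        Set.mem_setOf_eq] at hv
      rcases hv with ((((rfl | rfl | rfl) | ⟨i, hi, rfl⟩) | ⟨i, hi, rfl⟩) | rfl | rfl) <;>
        simp only [SetLike.mem_coe, AddMonoidHom.mem_ker, phi, AddMonoidHom.coe_mk,
          ZeroHom.coe_mk]
      · rw [g0_eq]; simp
      · simp [ex2]
      · simp [ew]
      · have hne : (⟨n - 1, hlt⟩ : Fin n) ≠ i := by
          intro h
          have : (i : ℕ) = n - 1 := by rw [← h]
          omega
        simp [ey, Pi.single_eq_of_ne hne]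
      · simp [ez]
      · rw [v2_eq]; simp
      · rw [vnlin_eq]
        simp only
        have h1 : ((1 : ℤ) - ((m:ℤ) * (((n-1 : ℕ) : ℤ) + 1) + 1)) = -((m * n : ℕ) : ℤ) := by
          push_cast
          have : (((n-1 : ℕ)) : ℤ) = (n : ℤ) - 1 := by omega
          rw [this]; ring
        rw [h1]
        push_cast
        rw [show ((m:ZMod (m*n)) * (n:ZMod (m*n))) = ((m*n : ℕ) : ZMod (m*n)) by push_cast; ring,
          ZMod.natCast_self]
        ring
    · intro v hv
      simp only [AddMonoidHom.mem_ker, phi, AddMonoidHom.coe_mk, ZeroHom.coe_mk] at hv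
      rw [ZMod.intCast_zmod_eq_zero_iff_dvd] at hv
      obtain ⟨k, hk⟩ := hv
      have hγeq : v.2.2.2.1 ⟨n-1,hlt⟩ - v.1 = (m : ℤ) * n * (-k) := by
        push_cast at hk
        linear_combination -hk
      rw [key_decomp m n hn hlt v (-k) hγeq]
      refine add_mem (add_mem (add_mem (add_mem (add_mem (add_mem ?_ ?_) ?_) ?_) ?_) ?_) ?_
      · refine zsmul_mem (AddSubgroup.subset_closure ?_) _
        exact Or.inl (Or.inl (Or.inl (Or.inl rfl)))
      · refine zsmul_mem (AddSubgroup.subset_closure ?_) _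
        exact Or.inr (Or.inl rfl)
      · refine zsmul_mem (AddSubgroup.subset_closure ?_) _
        exact Or.inr (Or.inr rfl)
      · refine zsmul_mem (AddSubgroup.subset_closure ?_) _
        exact Or.inl (Or.inl (Or.inl (Or.inr (Or.inl rfl))))
      · refine zsmul_mem (AddSubgroup.subset_closure ?_) _
        exact Or.inl (Or.inl (Or.inl (Or.inr (Or.inr rfl))))
      · refine AddSubgroup.sum_mem _ (fun i _ => ?_)
        rcases eq_or_ne i (⟨n-1,hlt⟩ : Fin n) with rfl | hi
        · simp only [if_pos rfl, if_true, zero_smul]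
          exact zero_mem _
        · have hilt : (i : ℕ) + 1 < n := by
            have : (i : ℕ) ≠ n - 1 := fun h => hi (Fin.ext (by simp [h]))
            omega
          rw [if_neg hi]
          refine zsmul_mem (AddSubgroup.subset_closure ?_) _
          exact Or.inl (Or.inl (Or.inr ⟨i, hilt, rfl⟩))
      · refine AddSubgroup.sum_mem _ (fun i _ => ?_)
        rcases eq_or_ne i (⟨n-1,hlt⟩ : Fin n) with rfl | hi
        · simp only [if_pos rfl, if_true, zero_smul]
          exact zero_mem _
        · have hilt : (i : ℕ) + 1 < n := by
            have : (i : ℕ) ≠ n - 1 := fun h => hi (Fin.ext (by simp [h]))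
            omega
          rw [if_neg hi]
          refine zsmul_mem (AddSubgroup.subset_closure ?_) _
          exact Or.inl (Or.inr ⟨i, hilt, rfl⟩)
  haveI : NeZero (m * n) := ⟨by positivity⟩
  rw [hLker, AddSubgroup.index_ker]
  have hsurj : Function.Surjective (phi m n hlt) := by
    intro t
    obtain ⟨k, rfl⟩ := ZMod.intCast_surjective t
    exact ⟨(k, 0, 0, 0, 0), by simp [phi]⟩
  rw [AddMonoidHom.range_eq_top.mpr hsurj]
  rw [Nat.card_congr AddSubgroup.topEquiv.toEquiv]
  simp [Nat.card_eq_fintype_card, ZMod.card]
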